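/- Let ν > 0, m ∈ ℝ, s² > 0. Then the differential entropy of the location-scale Student-t density satisfies: −∫_ℝ T(y; ν, m, s²) · ln T(y; ν, m, s²) dy = ((ν+1)/2)·(ψ((ν+1)/2) − ψ(ν/2)) + ln(√ν · B(ν/2, 1/2)) + (1/2)·ln(s²). -/

import Mathlib

open Real MeasureTheory Matrix

/-- Univariate Gaussian density `N(y; m, v)` with mean `m`, variance `v`. -/
noncomputable def gauss1 (y m v : ℝ) : ℝ :=
  (2 * π * v) ^ (-(1 : ℝ) / 2) * Real.exp (-((y - m) ^ 2) / (2 * v))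

/-- Multivariate Gaussian density in precision form: `N(θ; μ, P⁻¹)` with precision matrix `P`. -/
noncomputable def gaussND {ι : Type*} [Fintype ι] [DecidableEq ι]
    (θ μ : ι → ℝ) (P : Matrix ι ι ℝ) : ℝ :=
  (2 * π) ^ (-(Fintype.card ι : ℝ) / 2) * P.det ^ ((1 : ℝ) / 2) *
    Real.exp (-(1 / 2) * ((θ - μ) ⬝ᵥ (P *ᵥ (θ - μ))))

/-- Gamma density `G(τ; α, β)` with shape `α` and rate `β`. -/
noncomputable def gammaPdf (τ α β : ℝ) : ℝ :=
  β ^ α / Real.Gamma α * τ ^ (α - 1) * Real.exp (-β * τ)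

/-- Normal-Gamma density `NG(θ, τ; μ, Λ, α, β) = N(θ; μ, (τΛ)⁻¹) · G(τ; α, β)`. -/
noncomputable def normalGamma {ι : Type*} [Fintype ι] [DecidableEq ι]
    (θ : ι → ℝ) (τ : ℝ) (μ : ι → ℝ) (Λ : Matrix ι ι ℝ) (α β : ℝ) : ℝ :=
  gaussND θ μ (τ • Λ) * gammaPdf τ α β

/-- Location-scale Student-t density `T(y; ν, m, s²)`. -/
noncomputable def studentT (y ν m s2 : ℝ) : ℝ :=
  Real.Gamma ((ν + 1) / 2) / (Real.sqrt (π * ν * s2) * Real.Gamma (ν / 2)) *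
    (1 + (y - m) ^ 2 / (ν * s2)) ^ (-((ν + 1) / 2))

/-- Multivariate location-scale Student-t density `T_D(θ; ν, μ, Σ)`. -/
noncomputable def multiStudentT {ι : Type*} [Fintype ι] [DecidableEq ι]
    (θ : ι → ℝ) (ν : ℝ) (μ : ι → ℝ) (S : Matrix ι ι ℝ) : ℝ :=
  Real.Gamma ((ν + Fintype.card ι) / 2) /
      (Real.Gamma (ν / 2) * (ν * π) ^ ((Fintype.card ι : ℝ) / 2) * S.det ^ ((1 : ℝ) / 2)) *
    (1 + (θ - μ) ⬝ᵥ (S⁻¹ *ᵥ (θ - μ)) / ν) ^ (-((ν + Fintype.card ι) / 2))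

/-- The digamma function: the derivative of `ln ∘ Γ`. -/
noncomputable def digamma (x : ℝ) : ℝ := deriv (fun t => Real.log (Real.Gamma t)) x

/-- The Beta function `B(a, b) = Γ(a)Γ(b)/Γ(a+b)`. -/
noncomputable def betaFn (a b : ℝ) : ℝ := Real.Gamma a * Real.Gamma b / Real.Gamma (a + b)

-- Auxiliary lemmas
lemma base_pos (u : ℝ) : (0:ℝ) < 1 + u ^ 2 := by positivity

lemma cont_pow (p : ℝ) : Continuous fun u : ℝ => (1 + u ^ 2) ^ (-p) :=
  (by continuity : Continuous fun u : ℝ => 1 + u ^ 2).rpow_const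
    fun u => Or.inl (base_pos u).ne'

lemma integrable_pow {p : ℝ} (hp : 1/2 < p) :
    Integrable fun u : ℝ => (1 + u ^ 2) ^ (-p) := by
  have hp0 : 0 < p := by linarith
  have hmain : Integrable (fun u : ℝ => (2:ℝ) ^ p * (1 + ‖u‖) ^ (-(2*p))) :=
    (integrable_one_add_norm (by simpa using by linarith : (Module.finrank ℝ ℝ : ℝ) < 2*p)).const_mul _
  refine hmain.mono' (cont_pow p).aestronglyMeasurable ?_
  refine Filter.Eventually.of_forall fun u => ?_
  have h1 : (0:ℝ) < 1 + ‖u‖ := by positivity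
  rw [norm_of_nonneg (rpow_nonneg (base_pos u).le _)]
  have key : (1 + ‖u‖) ^ 2 / 2 ≤ 1 + u ^ 2 := by
    have : (‖u‖ - 1)^2 ≥ 0 := sq_nonneg _
    have hn : ‖u‖ ^ 2 = u ^ 2 := by rw [Real.norm_eq_abs, sq_abs]
    nlinarith
  have := Real.rpow_le_rpow_of_nonpos (by positivity : (0:ℝ) < (1 + ‖u‖)^2/2) key
    (by linarith : -p ≤ 0)
  calc (1 + u ^ 2) ^ (-p) ≤ ((1 + ‖u‖)^2/2) ^ (-p) := this
    _ = (2:ℝ) ^ p * (1 + ‖u‖) ^ (-(2*p)) := by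
        rw [Real.div_rpow (by positivity) (by norm_num), ← Real.rpow_natCast (1+‖u‖) 2,
          ← Real.rpow_mul h1.le, Real.rpow_neg (by norm_num : (0:ℝ) ≤ 2)]
        have : ((2:ℕ):ℝ) * -p = -(2*p) := by push_cast; ring
        rw [this]
        field_simp


lemma cont_powlog (p : ℝ) : Continuous fun u : ℝ => (1 + u ^ 2) ^ (-p) * Real.log (1 + u ^ 2) := by
  refine (cont_pow p).mul ?_
  have : Continuous fun u : ℝ => (1 + u ^ 2) := by continuity
  exact this.log fun u => (base_pos u).ne'

lemma log_le_pow (ε : ℝ) (hε : 0 < ε) (x : ℝ) (hx : 1 ≤ x) :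
    Real.log x ≤ x ^ ε / ε := by
  have hx0 : 0 < x := lt_of_lt_of_le one_pos hx
  have h1 : Real.log (x ^ ε) = ε * Real.log x := Real.log_rpow hx0 ε
  have h2 : Real.log (x ^ ε) ≤ x ^ ε := (Real.log_le_sub_one_of_pos (rpow_pos_of_pos hx0 ε)).trans (by linarith [rpow_pos_of_pos hx0 ε])
  rw [le_div_iff₀ hε, mul_comm, ← h1]
  exact h2

lemma integrable_powlog {p : ℝ} (hp : 1/2 < p) :
    Integrable fun u : ℝ => (1 + u ^ 2) ^ (-p) * Real.log (1 + u ^ 2) := by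
  set ε := (p - 1/2)/2 with hεdef
  have hε : 0 < ε := by simp only [hεdef]; linarith
  have hq : 1/2 < p - ε := by simp only [hεdef]; linarith
  refine ((integrable_pow hq).const_mul ε⁻¹).mono'
    (cont_powlog p).aestronglyMeasurable (Filter.Eventually.of_forall fun u => ?_)
  have hb := base_pos u
  have hb1 : (1:ℝ) ≤ 1 + u ^ 2 := by nlinarith [sq_nonneg u]
  have hlog0 : 0 ≤ Real.log (1 + u ^ 2) := Real.log_nonneg hb1
  rw [norm_of_nonneg (mul_nonneg (rpow_nonneg hb.le _) hlog0)]
  calc (1 + u ^ 2) ^ (-p) * Real.log (1 + u ^ 2)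
      ≤ (1 + u ^ 2) ^ (-p) * ((1 + u ^ 2) ^ ε / ε) := by
        exact mul_le_mul_of_nonneg_left (log_le_pow ε hε _ hb1) (rpow_nonneg hb.le _)
    _ = ε⁻¹ * (1 + u ^ 2) ^ (-(p - ε)) := by
        rw [div_eq_inv_mul, ← mul_assoc, mul_comm ((1+u^2) ^ (-p)) ε⁻¹, mul_assoc,
          ← Real.rpow_add hb]
        ring_nf

lemma real_beta {a b : ℝ} (ha : 0 < a) (hb : 0 < b) :
    ∫ x in (0:ℝ)..1, x ^ (a-1) * (1-x) ^ (b-1) = Real.Gamma a * Real.Gamma b / Real.Gamma (a+b) := by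
  have key : Complex.betaIntegral a b = ((∫ x in (0:ℝ)..1, x ^ (a-1) * (1-x) ^ (b-1) : ℝ) : ℂ) := by
    rw [Complex.betaIntegral, ← intervalIntegral.integral_ofReal]
    refine intervalIntegral.integral_congr fun x hx => ?_
    rw [Set.uIcc_of_le (by norm_num : (0:ℝ) ≤ 1)] at hx
    obtain ⟨hx0, hx1⟩ := hx
    push_cast
    rw [Complex.ofReal_cpow hx0, Complex.ofReal_cpow (by linarith : (0:ℝ) ≤ 1 - x)]
    push_cast
    ring_nf
  have hG := Complex.Gamma_mul_Gamma_eq_betaIntegral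
    (by simpa using ha : 0 < (Complex.ofReal a).re) (by simpa using hb : 0 < (Complex.ofReal b).re)
  rw [key] at hG
  have hab : Complex.Gamma (↑a + ↑b) = ((Real.Gamma (a+b) : ℝ) : ℂ) := by
    rw [← Complex.ofReal_add, Complex.Gamma_ofReal]
  rw [Complex.Gamma_ofReal, Complex.Gamma_ofReal, hab, ← Complex.ofReal_mul, ← Complex.ofReal_mul] at hG
  have := Complex.ofReal_injective hG
  have hGab : Real.Gamma (a+b) ≠ 0 := (Real.Gamma_pos_of_pos (by linarith)).ne'
  field_simp
  linarith [this]


lemma even_integral {f : ℝ → ℝ} (hint : Integrable f) (heven : ∀ x, f (-x) = f x) :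
    ∫ x : ℝ, f x = 2 * ∫ x in Set.Ioi (0:ℝ), f x := by
  have h1 : (∫ x in Set.Iic (0:ℝ), f x) = ∫ x in Set.Ioi (0:ℝ), f x := by
    rw [← neg_zero, ← integral_comp_neg_Ioi]
    simp only [heven, neg_zero]
  rw [← intervalIntegral.integral_Iic_add_Ioi (hint.integrableOn) (hint.integrableOn), h1]
  ring

lemma image_inv_sq : (fun u : ℝ => (1 + u ^ 2)⁻¹) '' Set.Ioi 0 = Set.Ioo 0 1 := by
  ext y
  constructor
  · rintro ⟨u, hu, rfl⟩
    have hu' : (0:ℝ) < u := hu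
    have : (1:ℝ) < 1 + u ^ 2 := by nlinarith
    exact ⟨inv_pos.mpr (by linarith), inv_lt_one_of_one_lt₀ this⟩
  · rintro ⟨hy0, hy1⟩
    have h1 : (1:ℝ) < y⁻¹ := (one_lt_inv₀ hy0).mpr hy1
    refine ⟨Real.sqrt (y⁻¹ - 1), Real.sqrt_pos.mpr (by linarith), ?_⟩
    show (1 + Real.sqrt (y⁻¹ - 1) ^ 2)⁻¹ = y
    rw [Real.sq_sqrt (by linarith)]
    field_simp
    ring

lemma injOn_inv_sq : Set.InjOn (fun u : ℝ => (1 + u ^ 2)⁻¹) (Set.Ioi 0) := by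
  intro u hu v hv h
  simp only at h
  have h2 : (1:ℝ) + u ^ 2 = 1 + v ^ 2 := inv_injective h
  have hu' : (0:ℝ) < u := hu
  have hv' : (0:ℝ) < v := hv
  nlinarith

lemma integral_pow_eq {p : ℝ} (hp : 1/2 < p) :
    ∫ u : ℝ, (1 + u ^ 2) ^ (-p) = Real.sqrt π * Real.Gamma (p - 1/2) / Real.Gamma p := by
  have hderiv : ∀ u ∈ Set.Ioi (0:ℝ),
      HasDerivWithinAt (fun u : ℝ => (1 + u ^ 2)⁻¹) (-(2*u) / (1 + u ^ 2) ^ 2) (Set.Ioi 0) u := by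
    intro u hu
    have h1 : HasDerivAt (fun u : ℝ => 1 + u ^ 2) (2*u) u := by
      simpa using (hasDerivAt_pow 2 u).const_add 1
    exact (h1.inv (base_pos u).ne').hasDerivWithinAt
  have himg := MeasureTheory.integral_image_eq_integral_abs_deriv_smul
    measurableSet_Ioi hderiv injOn_inv_sq
    (fun x : ℝ => x ^ (p - 1/2 - 1) * (1 - x) ^ ((1:ℝ)/2 - 1))
  rw [image_inv_sq] at himg
  have hpt : ∀ u ∈ Set.Ioi (0:ℝ),
      |(-(2*u) / (1 + u ^ 2) ^ 2)| • (((1 + u ^ 2)⁻¹) ^ (p - 1/2 - 1) *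
        (1 - (1 + u ^ 2)⁻¹) ^ ((1:ℝ)/2 - 1)) = 2 * (1 + u ^ 2) ^ (-p) := by
    intro u hu
    have hu' : (0:ℝ) < u := hu
    have hA := base_pos u
    have habs : |(-(2*u) / (1 + u ^ 2) ^ 2)| = 2*u / (1 + u ^ 2) ^ 2 := by
      rw [abs_div, abs_neg, abs_of_pos (by linarith), abs_of_pos (by positivity)]
    have hsub : 1 - (1 + u ^ 2)⁻¹ = u ^ 2 / (1 + u ^ 2) := by field_simp; ring
    have e1 : ((1 + u ^ 2)⁻¹) ^ (p - 1/2 - 1) = (1 + u ^ 2) ^ (-(p - 3/2)) := by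
      rw [Real.inv_rpow hA.le, ← Real.rpow_neg hA.le,
        show -(p - 1/2 - 1) = -(p - 3/2) by ring]
    have e2 : ((u ^ 2 / (1 + u ^ 2))) ^ ((1:ℝ)/2 - 1) = u⁻¹ * (1 + u ^ 2) ^ ((1:ℝ)/2) := by
      rw [Real.div_rpow (sq_nonneg u) hA.le]
      have h3 : ((u:ℝ) ^ 2) ^ ((1:ℝ)/2 - 1) = u⁻¹ := by
        rw [← Real.rpow_natCast u 2, ← Real.rpow_mul hu'.le]
        norm_num [Real.rpow_neg_one]
      have h4 : ((1 + u ^ 2)) ^ ((1:ℝ)/2 - 1) = ((1 + u ^ 2) ^ ((1:ℝ)/2))⁻¹ := by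
        rw [show (1:ℝ)/2 - 1 = -(1/2) by ring, Real.rpow_neg hA.le]
      rw [h3, h4]
      field_simp
    rw [smul_eq_mul, habs, hsub, e1, e2]
    have hA2 : ((1:ℝ) + u ^ 2) ^ (2:ℕ) = (1 + u ^ 2) ^ ((2:ℕ):ℝ) := (Real.rpow_natCast _ 2).symm
    rw [hA2, div_eq_mul_inv, ← Real.rpow_neg hA.le]
    rw [show (2*u) * (1 + u^2) ^ (-((2:ℕ):ℝ)) * ((1 + u ^ 2) ^ (-(p - 3/2)) * (u⁻¹ * (1 + u ^ 2) ^ ((1:ℝ)/2)))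
        = (2 * (u * u⁻¹)) * ((1 + u^2) ^ (-((2:ℕ):ℝ)) * (1 + u ^ 2) ^ (-(p - 3/2)) * (1 + u ^ 2) ^ ((1:ℝ)/2)) by ring]
    rw [mul_inv_cancel₀ hu'.ne', ← Real.rpow_add hA, ← Real.rpow_add hA]
    norm_num
    rw [show -2 + (3/2 - p) + 1/2 = -p by ring]
  rw [MeasureTheory.setIntegral_congr_fun measurableSet_Ioi hpt] at himg
  have hbeta : (∫ x in Set.Ioo (0:ℝ) 1, x ^ (p - 1/2 - 1) * (1 - x) ^ ((1:ℝ)/2 - 1))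
      = Real.Gamma (p - 1/2) * Real.Gamma (1/2) / Real.Gamma (p - 1/2 + 1/2) := by
    have := real_beta (a := p - 1/2) (b := 1/2) (by linarith) (by norm_num)
    rw [intervalIntegral.integral_of_le (by norm_num : (0:ℝ) ≤ 1),
      MeasureTheory.integral_Ioc_eq_integral_Ioo] at this
    exact this
  rw [hbeta, MeasureTheory.integral_const_mul, Real.Gamma_one_half_eq,
    show p - 1/2 + 1/2 = p by ring] at himg
  rw [even_integral (integrable_pow hp) (fun x => by rw [neg_sq]), ← himg]
  ring

lemma hasDerivAt_pow_param (u x : ℝ) :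
    HasDerivAt (fun q : ℝ => (1 + u ^ 2) ^ (-q))
      (-((1 + u ^ 2) ^ (-x) * Real.log (1 + u ^ 2))) x := by
  have hA := base_pos u
  have h0 : HasDerivAt (fun q : ℝ => Real.log (1 + u ^ 2) * -q)
      (-Real.log (1 + u ^ 2)) x := by
    simpa using ((hasDerivAt_id x).neg.const_mul (Real.log (1 + u ^ 2)))
  have h1 := h0.exp
  have heq : (fun q : ℝ => (1 + u ^ 2) ^ (-q)) =
      fun q : ℝ => Real.exp (Real.log (1 + u ^ 2) * -q) := by
    funext q; rw [Real.rpow_def_of_pos hA]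
  rw [heq]
  convert h1 using 1
  rw [← Real.rpow_def_of_pos hA]
  ring

lemma digamma_hasDeriv {x : ℝ} (hx : 0 < x) :
    HasDerivAt (fun t => Real.log (Real.Gamma t)) (digamma x) x := by
  have hd : DifferentiableAt ℝ Real.Gamma x := by
    refine Real.differentiableAt_Gamma fun m => ?_
    intro h
    have : (0:ℝ) ≤ m := Nat.cast_nonneg m
    rw [h] at hx
    linarith
  have h2 : DifferentiableAt ℝ (fun t => Real.log (Real.Gamma t)) x :=
    hd.log (Real.Gamma_pos_of_pos hx).ne'
  exact h2.hasDerivAt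

lemma hasDeriv_F {p : ℝ} (hp : 1/2 < p) :
    HasDerivAt (fun q : ℝ => ∫ u : ℝ, (1 + u ^ 2) ^ (-q))
      (∫ u : ℝ, -((1 + u ^ 2) ^ (-p) * Real.log (1 + u ^ 2))) p := by
  set ε := (p - 1/2)/2 with hεdef
  have hε : 0 < ε := by simp only [hεdef]; linarith
  have hq : 1/2 < p - ε := by simp only [hεdef]; linarith
  refine (hasDerivAt_integral_of_dominated_loc_of_deriv_le (s := Metric.ball p ε)
    (bound := fun u : ℝ => (1 + u ^ 2) ^ (-(p - ε)) * Real.log (1 + u ^ 2))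
    (F' := fun x u => -((1 + u ^ 2) ^ (-x) * Real.log (1 + u ^ 2))) (Metric.ball_mem_nhds p hε)
    (Filter.Eventually.of_forall fun x => (cont_pow x).aestronglyMeasurable)
    (integrable_pow hp) ((cont_powlog p).neg.aestronglyMeasurable) ?_ (integrable_powlog hq)
    (Filter.Eventually.of_forall fun u x _ => hasDerivAt_pow_param u x)).2
  refine Filter.Eventually.of_forall fun u x hx => ?_
  have hA := base_pos u
  have hA1 : (1:ℝ) ≤ 1 + u ^ 2 := by nlinarith [sq_nonneg u]
  have hlog0 : 0 ≤ Real.log (1 + u ^ 2) := Real.log_nonneg hA1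
  rw [norm_neg, norm_of_nonneg (mul_nonneg (Real.rpow_nonneg hA.le _) hlog0)]
  refine mul_le_mul_of_nonneg_right ?_ hlog0
  refine Real.rpow_le_rpow_of_exponent_le hA1 ?_
  have := abs_lt.mp (mem_ball_iff_norm.mp hx)
  have : |x - p| < ε := by simpa [Real.dist_eq] using Metric.mem_ball.mp hx
  have := abs_lt.mp this
  linarith

lemma key_G {p : ℝ} (hp : 1/2 < p) :
    ∫ u : ℝ, (1 + u ^ 2) ^ (-p) * Real.log (1 + u ^ 2)
      = (Real.sqrt π * Real.Gamma (p - 1/2) / Real.Gamma p) * (digamma p - digamma (p - 1/2)) := by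
  -- Φ q = √π * exp (log Γ (q-1/2) - log Γ q)
  have hΦderiv : HasDerivAt
      (fun q : ℝ => Real.sqrt π * Real.exp (Real.log (Real.Gamma (q - 1/2)) - Real.log (Real.Gamma q)))
      (Real.sqrt π * Real.exp (Real.log (Real.Gamma (p - 1/2)) - Real.log (Real.Gamma p)) *
        (digamma (p - 1/2) - digamma p)) p := by
    have h1 : HasDerivAt (fun q : ℝ => Real.log (Real.Gamma (q - 1/2))) (digamma (p - 1/2)) p := by
      have := (digamma_hasDeriv (by linarith : (0:ℝ) < p - 1/2)).comp p
        ((hasDerivAt_id p).sub_const (1/2))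
      simpa [Function.comp_def] using this
    have h2 : HasDerivAt (fun q : ℝ => Real.log (Real.Gamma q)) (digamma p) p :=
      digamma_hasDeriv (by linarith)
    have h3 := ((h1.sub h2).exp).const_mul (Real.sqrt π)
    refine h3.congr_deriv ?_
    simp only [Pi.sub_apply]
    ring
  -- Φ agrees with the integral near p
  have heq : (fun q : ℝ => ∫ u : ℝ, (1 + u ^ 2) ^ (-q)) =ᶠ[nhds p]
      (fun q : ℝ => Real.sqrt π * Real.exp (Real.log (Real.Gamma (q - 1/2)) - Real.log (Real.Gamma q))) := by
    have hopen : Set.Ioi (1/2 : ℝ) ∈ nhds p := (isOpen_Ioi).mem_nhds hp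
    filter_upwards [hopen] with q hq
    have hq' : (1/2:ℝ) < q := hq
    rw [integral_pow_eq hq', Real.exp_sub, Real.exp_log (Real.Gamma_pos_of_pos (by linarith)),
      Real.exp_log (Real.Gamma_pos_of_pos (by linarith : (0:ℝ) < q))]
    ring
  have hderiv2 : HasDerivAt (fun q : ℝ => ∫ u : ℝ, (1 + u ^ 2) ^ (-q))
      (Real.sqrt π * Real.exp (Real.log (Real.Gamma (p - 1/2)) - Real.log (Real.Gamma p)) *
        (digamma (p - 1/2) - digamma p)) p := by
    exact hΦderiv.congr_of_eventuallyEq heq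
  have huniq := (hasDeriv_F hp).unique hderiv2
  rw [MeasureTheory.integral_neg] at huniq
  have hexp : Real.exp (Real.log (Real.Gamma (p - 1/2)) - Real.log (Real.Gamma p))
      = Real.Gamma (p - 1/2) / Real.Gamma p := by
    rw [Real.exp_sub, Real.exp_log (Real.Gamma_pos_of_pos (by linarith)),
      Real.exp_log (Real.Gamma_pos_of_pos (by linarith : (0:ℝ) < p))]
  rw [hexp] at huniq
  have := neg_eq_iff_eq_neg.mp huniq
  rw [this]
  ring

/-- the differential entropy of the location-scale Student-t density. -/
theorem studentT_entropy (ν m s2 : ℝ) (hν : 0 < ν) (hs2 : 0 < s2) :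
    -∫ y : ℝ, studentT y ν m s2 * Real.log (studentT y ν m s2) =
      ((ν + 1) / 2) * (digamma ((ν + 1) / 2) - digamma (ν / 2)) +
        Real.log (Real.sqrt ν * betaFn (ν / 2) (1 / 2)) + (1 / 2) * Real.log s2 := by
  set p : ℝ := (ν + 1) / 2 with hpdef
  have hp : 1/2 < p := by rw [hpdef]; linarith
  have hp2 : p - 1/2 = ν / 2 := by rw [hpdef]; ring
  have hA : 0 < ν * s2 := mul_pos hν hs2
  set a : ℝ := Real.sqrt (ν * s2) with hadef
  have ha : 0 < a := Real.sqrt_pos.mpr hA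
  have ha2 : a ^ 2 = ν * s2 := Real.sq_sqrt hA.le
  have hπν : (0:ℝ) < π * ν * s2 := by positivity
  have hΓp : 0 < Real.Gamma p := Real.Gamma_pos_of_pos (by linarith)
  have hΓν : 0 < Real.Gamma (ν / 2) := Real.Gamma_pos_of_pos (by linarith)
  set c : ℝ := Real.Gamma p / (Real.sqrt (π * ν * s2) * Real.Gamma (ν / 2)) with hcdef
  have hc : 0 < c := div_pos hΓp (mul_pos (Real.sqrt_pos.mpr hπν) hΓν)
  have hTy : ∀ y : ℝ, studentT y ν m s2 = c * (1 + ((y - m)/a) ^ 2) ^ (-p) := by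
    intro y
    rw [studentT, div_pow, ha2]
  -- change of variables
  have hcomp : ∀ g : ℝ → ℝ, (∫ y : ℝ, g ((y - m)/a)) = a * ∫ u : ℝ, g u := by
    intro g
    calc (∫ y : ℝ, g ((y - m)/a)) = ∫ y : ℝ, (fun z => g (z / a)) (y - m) := rfl
      _ = ∫ z : ℝ, g (z / a) := by rw [integral_sub_right_eq_self (fun z => g (z / a)) m]
      _ = |a| • ∫ u : ℝ, g u := MeasureTheory.Measure.integral_comp_div (fun u => g u) a
      _ = a * ∫ u : ℝ, g u := by rw [abs_of_pos ha, smul_eq_mul]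
  have hint1 : Integrable fun y : ℝ => (1 + ((y - m)/a) ^ 2) ^ (-p) :=
    Integrable.comp_sub_right ((integrable_pow hp).comp_div ha.ne') m
  have hint2 : Integrable fun y : ℝ =>
      (1 + ((y - m)/a) ^ 2) ^ (-p) * Real.log (1 + ((y - m)/a) ^ 2) :=
    Integrable.comp_sub_right ((integrable_powlog hp).comp_div ha.ne') m
  have hF : ∫ u : ℝ, (1 + u ^ 2) ^ (-p) = Real.sqrt π * Real.Gamma (ν/2) / Real.Gamma p := by
    rw [integral_pow_eq hp, hp2]
  have hG : ∫ u : ℝ, (1 + u ^ 2) ^ (-p) * Real.log (1 + u ^ 2)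
      = (Real.sqrt π * Real.Gamma (ν/2) / Real.Gamma p) * (digamma p - digamma (ν/2)) := by
    rw [key_G hp, hp2]
  -- normalization : c * (a * F) = 1
  have hsqrtsplit : Real.sqrt (π * ν * s2) = Real.sqrt π * a := by
    rw [hadef, mul_assoc, Real.sqrt_mul pi_pos.le]
  have hnorm : c * (a * (Real.sqrt π * Real.Gamma (ν/2) / Real.Gamma p)) = 1 := by
    rw [hcdef, hsqrtsplit]
    field_simp
  -- split integrand
  have hsplit : ∀ y : ℝ, studentT y ν m s2 * Real.log (studentT y ν m s2)
      = Real.log c * (c * (1 + ((y - m)/a) ^ 2) ^ (-p))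
        - (p * c) * ((1 + ((y - m)/a) ^ 2) ^ (-p) * Real.log (1 + ((y - m)/a) ^ 2)) := by
    intro y
    have hB : (0:ℝ) < 1 + ((y - m)/a) ^ 2 := by positivity
    rw [hTy y, Real.log_mul hc.ne' (Real.rpow_pos_of_pos hB _).ne', Real.log_rpow hB]
    ring
  have hEint : ∫ y : ℝ, studentT y ν m s2 * Real.log (studentT y ν m s2)
      = Real.log c * (c * (a * (Real.sqrt π * Real.Gamma (ν/2) / Real.Gamma p)))
        - (p * c) * (a * ((Real.sqrt π * Real.Gamma (ν/2) / Real.Gamma p) * (digamma p - digamma (ν/2)))) := by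
    have h1 : ∫ y : ℝ, studentT y ν m s2 * Real.log (studentT y ν m s2)
        = ∫ y : ℝ, (Real.log c * (c * (1 + ((y - m)/a) ^ 2) ^ (-p))
          - (p * c) * ((1 + ((y - m)/a) ^ 2) ^ (-p) * Real.log (1 + ((y - m)/a) ^ 2))) := by
      exact MeasureTheory.integral_congr_ae (Filter.Eventually.of_forall hsplit)
    rw [h1, MeasureTheory.integral_sub ((hint1.const_mul c).const_mul (Real.log c))
        (hint2.const_mul (p * c)), MeasureTheory.integral_const_mul, MeasureTheory.integral_const_mul,
        MeasureTheory.integral_const_mul]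
    have h2 := hcomp (fun u => (1 + u ^ 2) ^ (-p))
    have h3 := hcomp (fun u => (1 + u ^ 2) ^ (-p) * Real.log (1 + u ^ 2))
    rw [h2, h3, hF, hG]
  rw [hEint]
  have hca : c * a * (Real.sqrt π * Real.Gamma (ν/2) / Real.Gamma p) = 1 := by
    rw [mul_assoc]; exact hnorm
  -- constant term
  have hbetapos : 0 < betaFn (ν/2) (1/2) := by
    rw [betaFn, show ν/2 + 1/2 = p by rw [hpdef]; ring]
    exact div_pos (mul_pos hΓν (Real.Gamma_pos_of_pos (by norm_num))) hΓp
  have hclog : -Real.log c = Real.log (Real.sqrt ν * betaFn (ν/2) (1/2)) + (1/2) * Real.log s2 := by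
    have hmul : c * (Real.sqrt ν * betaFn (ν/2) (1/2) * Real.sqrt s2) = 1 := by
      rw [hcdef, betaFn, show ν/2 + 1/2 = p by rw [hpdef]; ring, Real.Gamma_one_half_eq]
      rw [hsqrtsplit, hadef, Real.sqrt_mul hν.le]
      have h1 : Real.sqrt ν ≠ 0 := (Real.sqrt_pos.mpr hν).ne'
      have h2 : Real.sqrt s2 ≠ 0 := (Real.sqrt_pos.mpr hs2).ne'
      have h3 : Real.sqrt π ≠ 0 := (Real.sqrt_pos.mpr pi_pos).ne'
      field_simp
    have hX : c = (Real.sqrt ν * betaFn (ν/2) (1/2) * Real.sqrt s2)⁻¹ :=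
      eq_inv_of_mul_eq_one_left (by linarith [hmul, mul_comm c (Real.sqrt ν * betaFn (ν/2) (1/2) * Real.sqrt s2)])
    rw [hX, Real.log_inv, neg_neg,
      Real.log_mul (mul_pos (Real.sqrt_pos.mpr hν) hbetapos).ne'
        (Real.sqrt_pos.mpr hs2).ne', Real.log_sqrt hs2.le]
    ring
  calc -(Real.log c * (c * (a * (Real.sqrt π * Real.Gamma (ν/2) / Real.Gamma p)))
        - (p * c) * (a * ((Real.sqrt π * Real.Gamma (ν/2) / Real.Gamma p) * (digamma p - digamma (ν/2)))))
      = -(Real.log c * (c * a * (Real.sqrt π * Real.Gamma (ν/2) / Real.Gamma p)))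
        + p * (c * a * (Real.sqrt π * Real.Gamma (ν/2) / Real.Gamma p)) * (digamma p - digamma (ν/2)) := by
        ring
    _ = -Real.log c + p * (digamma p - digamma (ν/2)) := by rw [hca]; ring
    _ = p * (digamma p - digamma (ν/2)) + Real.log (Real.sqrt ν * betaFn (ν/2) (1/2)) + (1/2) * Real.log s2 := by
        rw [hclog]; ring
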